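/- Let W, V ∈ ℝ^{n×k} have orthonormal columns, let ε ≥ 0 satisfy ‖WWᵀ − VVᵀ‖₂ ≤ ε, and let 𝒞 ⊆ {1,…,n} with |𝒞| = k be such that σ_min((Vᵀ)_{:,𝒞}) ≥ s > ε. Suppose further that W is a normalized indicator matrix (one nonzero per row, unit columns). Then there exists a permutation matrix Π̂ ∈ ℝ^{k×k} such that Π̂ᵀ(Wᵀ)_{:,𝒞} is a diagonal matrix with strictly positive diagonal entries. -/
import Mathlib


open Matrix BigOperators

noncomputable def vecNorm {m : ℕ} (v : Fin m → ℝ) : ℝ :=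
  Real.sqrt (∑ i, v i ^ 2)

noncomputable def frobNorm {m n : ℕ} (A : Matrix (Fin m) (Fin n) ℝ) : ℝ :=
  Real.sqrt (∑ i, ∑ j, A i j ^ 2)

/-- spectral (operator) norm w.r.t. Euclidean norms -/
noncomputable def specNorm {m n : ℕ} (A : Matrix (Fin m) (Fin n) ℝ) : ℝ :=
  sSup {r | ∃ x : Fin n → ℝ, vecNorm x ≤ 1 ∧ r = vecNorm (A.mulVec x)}

/-- smallest singular value (for matrices with at least as many rows as columns) -/
noncomputable def sMin {m n : ℕ} (A : Matrix (Fin m) (Fin n) ℝ) : ℝ :=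
  sInf {r | ∃ x : Fin n → ℝ, vecNorm x = 1 ∧ r = vecNorm (A.mulVec x)}

/-- W is a normalized indicator matrix: exactly one nonzero per row, nonnegative
entries, equal nonzero values within each column, orthonormal columns. -/
def IsNormalizedIndicator {n k : ℕ} (W : Matrix (Fin n) (Fin k) ℝ) : Prop :=
  (∀ i : Fin n, ∃! j : Fin k, W i j ≠ 0) ∧
  (∀ i j, 0 ≤ W i j) ∧
  (∀ i i' j, W i j ≠ 0 → W i' j ≠ 0 → W i j = W i' j) ∧
  Wᵀ * W = 1

lemma vecNorm_nonneg' {m : ℕ} (v : Fin m → ℝ) : 0 ≤ vecNorm v := Real.sqrt_nonneg _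

lemma vecNorm_mulVec_le_frob {m n : ℕ} (A : Matrix (Fin m) (Fin n) ℝ)
    (y : Fin n → ℝ) (hy : vecNorm y ≤ 1) : vecNorm (A.mulVec y) ≤ frobNorm A := by
  have hS : (0:ℝ) ≤ ∑ j, y j ^ 2 := Finset.sum_nonneg fun j _ => sq_nonneg _
  have hy2 : ∑ j, y j ^ 2 ≤ 1 := by
    have h1 : Real.sqrt (∑ j, y j ^ 2) ≤ 1 := hy
    nlinarith [Real.sq_sqrt hS, Real.sqrt_nonneg (∑ j, y j ^ 2)]
  apply Real.sqrt_le_sqrt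
  calc ∑ i, (A.mulVec y i) ^ 2
      ≤ ∑ i, (∑ j, A i j ^ 2) * (∑ j, y j ^ 2) := by
        refine Finset.sum_le_sum fun i _ => ?_
        exact Finset.sum_mul_sq_le_sq_mul_sq Finset.univ (fun j => A i j) y
    _ ≤ ∑ i, ∑ j, A i j ^ 2 := by
        refine Finset.sum_le_sum fun i _ => ?_
        exact mul_le_of_le_one_right (Finset.sum_nonneg fun j _ => sq_nonneg _) hy2

lemma vecNorm_mulVec_le_specNorm {m n : ℕ} (A : Matrix (Fin m) (Fin n) ℝ)
    {x : Fin n → ℝ} (hx : vecNorm x ≤ 1) : vecNorm (A.mulVec x) ≤ specNorm A := by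
  apply le_csSup
  · exact ⟨frobNorm A, by rintro r ⟨y, hy, rfl⟩; exact vecNorm_mulVec_le_frob A y hy⟩
  · exact ⟨x, hx, rfl⟩

lemma sMin_le_vecNorm {m n : ℕ} (A : Matrix (Fin m) (Fin n) ℝ)
    {u : Fin n → ℝ} (hu : vecNorm u = 1) : sMin A ≤ vecNorm (A.mulVec u) := by
  apply csInf_le
  · exact ⟨0, by rintro r ⟨y, hy, rfl⟩; exact vecNorm_nonneg' _⟩
  · exact ⟨u, hu, rfl⟩

lemma mulVec_ind_sub {m p : ℕ} (A : Matrix (Fin m) (Fin p) ℝ) (r : ℝ) (a b : Fin p) :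
    A.mulVec (fun t => r * ((if t = a then (1:ℝ) else 0) - (if t = b then 1 else 0)))
      = fun l => r * (A l a - A l b) := by
  funext l
  simp only [mulVec, dotProduct]
  have h : ∀ t, A l t * (r * ((if t = a then (1:ℝ) else 0) - (if t = b then 1 else 0)))
      = r * ((if t = a then A l t else 0) - (if t = b then A l t else 0)) := by
    intro t
    by_cases h1 : t = a <;> by_cases h2 : t = b <;> by_cases h3 : a = b <;>
      simp_all <;> ring
  rw [Finset.sum_congr rfl fun t _ => h t, ← Finset.mul_sum, Finset.sum_sub_distrib,
    Finset.sum_ite_eq', Finset.sum_ite_eq']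
  simp

lemma vecNorm_ind_pair {m : ℕ} (a b : Fin m) (hab : a ≠ b) :
    vecNorm (fun t => (Real.sqrt 2)⁻¹ * ((if t = a then (1:ℝ) else 0) - (if t = b then 1 else 0))) = 1 := by
  have hr2 : ((Real.sqrt 2)⁻¹) ^ 2 = 2⁻¹ := by
    rw [inv_pow, Real.sq_sqrt (by norm_num : (0:ℝ) ≤ 2)]
  have h : ∀ t : Fin m, ((Real.sqrt 2)⁻¹ * ((if t = a then (1:ℝ) else 0) - (if t = b then 1 else 0))) ^ 2
      = 2⁻¹ * ((if t = a then (1:ℝ) else 0) + (if t = b then 1 else 0)) := by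
    intro t
    have hab' : ¬ a = b := hab
    have hba : ¬ b = a := fun h => hab h.symm
    by_cases h1 : t = a <;> by_cases h2 : t = b <;>
      simp [h1, h2, hab', hba, hr2, mul_neg_one, neg_sq]
  unfold vecNorm
  rw [Finset.sum_congr rfl fun t _ => h t, ← Finset.mul_sum, Finset.sum_add_distrib,
    Finset.sum_ite_eq', Finset.sum_ite_eq']
  simp; norm_num

lemma dotProduct_self_eq {m : ℕ} (v : Fin m → ℝ) : v ⬝ᵥ v = ∑ i, v i ^ 2 := by
  simp [dotProduct, sq]

/-- if the selected k×k submatrix of Vᵀ has smallest singular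
value ≥ s > ε ≥ ‖WWᵀ − VVᵀ‖₂ and W is a normalized indicator matrix, then some
permutation Π̂ makes Π̂ᵀ(Wᵀ)_{:,𝒞} diagonal with strictly positive diagonal. -/
theorem selected_columns_permuted_diagonal
    (n k : ℕ) (ε s : ℝ)
    (W V : Matrix (Fin n) (Fin k) ℝ)
    (hWind : IsNormalizedIndicator W)
    (hV : Vᵀ * V = 1)
    (hproj : specNorm (W * Wᵀ - V * Vᵀ) ≤ ε)
    (c : Fin k → Fin n) (hc : Function.Injective c)
    (hσ : s ≤ sMin ((Vᵀ).submatrix id c)) (hsε : ε < s) :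
    ∃ σ : Equiv.Perm (Fin k),
      (∀ i j : Fin k, i ≠ j →
        (((Matrix.of fun a b : Fin k => if σ a = b then (1:ℝ) else 0)ᵀ *
          (Wᵀ).submatrix id c) i j) = 0) ∧
      (∀ i : Fin k, 0 <
        (((Matrix.of fun a b : Fin k => if σ a = b then (1:ℝ) else 0)ᵀ *
          (Wᵀ).submatrix id c) i i)) := by
  classical
  obtain ⟨h1, h2, h3, _h4⟩ := hWind
  choose f hf hfu using fun i : Fin k => h1 (c i)
  -- f i : the unique nonzero column of row (c i); hf : W (c i) (f i) ≠ 0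
  have finj : Function.Injective f := by
    by_contra hninj
    rw [Function.not_injective_iff] at hninj
    obtain ⟨i, j, hfeq, hij⟩ := hninj
    -- rows c i and c j of W are identical
    have hrows : ∀ l, W (c i) l = W (c j) l := by
      intro l
      by_cases hl : l = f i
      · subst hl
        have hwj : W (c j) (f i) ≠ 0 := by rw [hfeq]; exact hf j
        exact h3 _ _ _ (hf i) hwj
      · have hzi : W (c i) l = 0 := by
          by_contra hne; exact hl (hfu i l hne)
        have hzj : W (c j) l = 0 := by
          by_contra hne; exact hl (hfeq ▸ hfu j l hne)
        rw [hzi, hzj]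
    set r : ℝ := (Real.sqrt 2)⁻¹ with hr
    set x : Fin n → ℝ := fun t => r * ((if t = c i then (1:ℝ) else 0) - (if t = c j then 1 else 0)) with hxdef
    set u : Fin k → ℝ := fun t => r * ((if t = i then (1:ℝ) else 0) - (if t = j then 1 else 0)) with hudef
    have hxnorm : vecNorm x = 1 := vecNorm_ind_pair (c i) (c j) (fun h => hij (hc h))
    have hunorm : vecNorm u = 1 := vecNorm_ind_pair i j hij
    -- (Vᵀ submatrix) u = Vᵀ x
    have hVeq : ((Vᵀ).submatrix id c).mulVec u = (Vᵀ).mulVec x := by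
      rw [hudef, hxdef, mulVec_ind_sub, mulVec_ind_sub]
      rfl
    -- Wᵀ x = 0
    have hWx : (Wᵀ).mulVec x = 0 := by
      rw [hxdef, mulVec_ind_sub]
      funext l
      simp [transpose_apply, hrows l]
    -- (W*Wᵀ - V*Vᵀ) x = -(V*Vᵀ) x
    have hdiff : (W * Wᵀ - V * Vᵀ).mulVec x = -(V * Vᵀ).mulVec x := by
      rw [Matrix.sub_mulVec, ← Matrix.mulVec_mulVec, hWx]
      simp
    -- ‖(V*Vᵀ) x‖ = ‖Vᵀ x‖
    have hVVx : vecNorm ((V * Vᵀ).mulVec x) = vecNorm ((Vᵀ).mulVec x) := by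
      unfold vecNorm
      congr 1
      rw [← dotProduct_self_eq, ← dotProduct_self_eq]
      set y := (Vᵀ).mulVec x with hy
      have h1' : (V * Vᵀ).mulVec x = V.mulVec y := by rw [hy, Matrix.mulVec_mulVec]
      rw [h1', Matrix.dotProduct_mulVec, ← Matrix.mulVec_transpose,
        Matrix.mulVec_mulVec, hV, Matrix.one_mulVec]
    have key : s ≤ ε := by
      calc s ≤ sMin ((Vᵀ).submatrix id c) := hσ
        _ ≤ vecNorm (((Vᵀ).submatrix id c).mulVec u) := sMin_le_vecNorm _ hunorm
        _ = vecNorm ((Vᵀ).mulVec x) := by rw [hVeq]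
        _ = vecNorm ((V * Vᵀ).mulVec x) := hVVx.symm
        _ = vecNorm ((W * Wᵀ - V * Vᵀ).mulVec x) := by
            rw [hdiff]; unfold vecNorm; congr 1; simp
        _ ≤ specNorm (W * Wᵀ - V * Vᵀ) := vecNorm_mulVec_le_specNorm _ (le_of_eq hxnorm)
        _ ≤ ε := hproj
    linarith
  -- build the permutation
  have hbij : Function.Bijective f := Finite.injective_iff_bijective.mp finj
  set e : Equiv.Perm (Fin k) := Equiv.ofBijective f hbij with he
  refine ⟨e.symm, ?_, ?_⟩
  · intro i j hij
    have hentry : ∀ i j : Fin k,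
        (((Matrix.of fun a b : Fin k => if e.symm a = b then (1:ℝ) else 0)ᵀ *
          (Wᵀ).submatrix id c) i j) = W (c j) (f i) := by
      intro i j
      simp only [Matrix.mul_apply, transpose_apply, Matrix.of_apply, submatrix_apply, id]
      rw [Finset.sum_eq_single (e i)]
      · rw [if_pos (e.symm_apply_apply i), one_mul]; rfl
      · intro b _ hb
        rw [if_neg, zero_mul]
        intro h
        exact hb (by rw [← h, Equiv.apply_symm_apply])
      · intro h; exact absurd (Finset.mem_univ _) h
    rw [hentry]
    by_contra hne
    exact hij (finj (hfu j (f i) hne))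
  · intro i
    have hentry : (((Matrix.of fun a b : Fin k => if e.symm a = b then (1:ℝ) else 0)ᵀ *
          (Wᵀ).submatrix id c) i i) = W (c i) (f i) := by
      simp only [Matrix.mul_apply, transpose_apply, Matrix.of_apply, submatrix_apply, id]
      rw [Finset.sum_eq_single (e i)]
      · rw [if_pos (e.symm_apply_apply i), one_mul]; rfl
      · intro b _ hb
        rw [if_neg, zero_mul]
        intro h
        exact hb (by rw [← h, Equiv.apply_symm_apply])
      · intro h; exact absurd (Finset.mem_univ _) h
    rw [hentry]
    exact lt_of_le_of_ne (h2 _ _) (Ne.symm (hf i))
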